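/- If an AME state exists in a mixed-dimensional system, then for any two nested dimension multisets w₁ ⊂ w₂ ⊆ N with dim w₁ > √(dim N), all proper sub-multisets of w₁ having dimension ≤ √(dim N), and all proper sub-multisets of w₂ other than w₁ having dimension ≤ √(dim N), the inequality (dim w₂)²/dim N − 1 ≥ (∏_{d∈𝔻} C(m_d(w₂), m_d(w₁))) · ((dim w₁)²/dim N − 1) holds (mixed-dimensional Scott bound). -/

import Mathlib

/-- The dimension of a multiset with multiplicity function `u` over distinct
local dimensions `dims`. -/
def mdim {ι : Type*} [Fintype ι] (dims : ι → ℕ) (u : ι → ℕ) : ℚ :=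
  ∏ i : ι, (dims i : ℚ) ^ u i

/-- Mixed-dimensional Scott bound: if an AME state exists (encoded here through
its Shor-Laflamme coefficients `A`: nonneg, `A_∅ = 1`, vanishing below the
threshold `Δ = √(dim N)`, and satisfying the unitary/MacWilliams relation), then
for nested multisets `w₁ ⊂ w₂ ⊆ N` with `dim w₁ > Δ`, all proper sub-multisets
of `w₁` of dimension `≤ Δ`, and all proper sub-multisets of `w₂` other than `w₁`
of dimension `≤ Δ`, the Scott inequality holds. -/
theorem scott_bound {ι : Type*} [Fintype ι] [DecidableEq ι]
    (dims : ι → ℕ) (hdims : ∀ i, 2 ≤ dims i) (hinj : Function.Injective dims)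
    (N w₁ w₂ : ι → ℕ)
    (A : (ι → ℕ) → ℚ)
    (hA0 : A 0 = 1)
    (hApos : ∀ v, v ≤ N → 0 ≤ A v)
    (hAvanish : ∀ v, v ≤ N → v ≠ 0 →
      (mdim dims v) ^ 2 ≤ mdim dims N → A v = 0)
    (hMacW : ∀ w, w ≤ N →
      (∏ i : ι, ((N i).choose (w i) : ℚ)) /
          min (mdim dims w) (mdim dims N / mdim dims w)
        = (mdim dims w)⁻¹ *
            ∑ v ∈ Finset.Icc 0 w,
              (∏ i : ι, ((N i - v i).choose (w i - v i) : ℚ)) * A v)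
    (hw12 : w₁ ≤ w₂) (hw12ne : w₁ ≠ w₂) (hw2N : w₂ ≤ N)
    (h1 : mdim dims N < (mdim dims w₁) ^ 2)
    (h2 : ∀ v, v ≤ w₁ → v ≠ w₁ → (mdim dims v) ^ 2 ≤ mdim dims N)
    (h3 : ∀ u, u ≤ w₂ → u ≠ w₁ → u ≠ w₂ → (mdim dims u) ^ 2 ≤ mdim dims N) :
    (mdim dims w₂) ^ 2 / mdim dims N - 1
      ≥ (∏ i : ι, ((w₂ i).choose (w₁ i) : ℚ)) *
          ((mdim dims w₁) ^ 2 / mdim dims N - 1) := by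
  classical
  have hdpos : ∀ i, (0:ℚ) < dims i := fun i => by
    exact_mod_cast Nat.lt_of_lt_of_le two_pos (hdims i)
  have hpos : ∀ u : ι → ℕ, 0 < mdim dims u := fun u =>
    Finset.prod_pos fun i _ => pow_pos (hdpos i) _
  have hmono : ∀ u v : ι → ℕ, u ≤ v → mdim dims u ≤ mdim dims v := by
    intro u v huv
    refine Finset.prod_le_prod (fun i _ => le_of_lt (pow_pos (hdpos i) _)) fun i _ => ?_
    exact pow_le_pow_right₀ (by exact_mod_cast Nat.le_trans (by norm_num) (hdims i)) (huv i)
  set D := mdim dims N with hD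
  set d1 := mdim dims w₁ with hd1
  set d2 := mdim dims w₂ with hd2
  have hw1N : w₁ ≤ N := hw12.trans hw2N
  have hDpos : 0 < D := hpos N
  have hd1pos : 0 < d1 := hpos w₁
  have hd2pos : 0 < d2 := hpos w₂
  have hd12 : d1 ≤ d2 := hmono _ _ hw12
  have h1' : D < d2 ^ 2 := h1.trans_le (by nlinarith)
  have hw1ne0 : w₁ ≠ 0 := by
    rintro rfl
    have hD1 : (1:ℚ) ≤ D := by
      have := hmono 0 N (fun i => Nat.zero_le _)
      rw [hD]; simpa [mdim] using this
    have hd11 : d1 = 1 := by simp [hd1, mdim]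
    rw [hd11] at h1; nlinarith
  have hw2ne0 : w₂ ≠ 0 := by
    rintro rfl
    exact hw1ne0 (le_antisymm hw12 fun i => Nat.zero_le _)
  have hmin1 : min d1 (D / d1) = D / d1 := by
    rw [min_eq_right]; rw [div_le_iff₀ hd1pos]; nlinarith
  have hmin2 : min d2 (D / d2) = D / d2 := by
    rw [min_eq_right]; rw [div_le_iff₀ hd2pos]; nlinarith
  set B1 : ℚ := ∏ i : ι, ((N i).choose (w₁ i) : ℚ) with hB1
  set B2 : ℚ := ∏ i : ι, ((N i).choose (w₂ i) : ℚ) with hB2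
  set C' : ℚ := ∏ i : ι, ((N i - w₁ i).choose (w₂ i - w₁ i) : ℚ) with hC'
  set K : ℚ := ∏ i : ι, ((w₂ i).choose (w₁ i) : ℚ) with hK
  have hB1pos : 0 < B1 := Finset.prod_pos fun i _ => by
    exact_mod_cast Nat.choose_pos (hw1N i)
  have hB2pos : 0 < B2 := Finset.prod_pos fun i _ => by
    exact_mod_cast Nat.choose_pos (hw2N i)
  -- sum at w₁
  have hsub1 : ({0, w₁} : Finset (ι → ℕ)) ⊆ Finset.Icc 0 w₁ := by
    intro v hv
    rcases Finset.mem_insert.mp hv with rfl | hv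
    · simp
    · rw [Finset.mem_singleton.mp hv]; simp
  have hsum1 : ∑ v ∈ Finset.Icc 0 w₁,
      (∏ i : ι, ((N i - v i).choose (w₁ i - v i) : ℚ)) * A v = B1 + A w₁ := by
    rw [← Finset.sum_subset hsub1 ?_]
    · rw [Finset.sum_pair (fun h => hw1ne0 h.symm)]
      simp [hA0, hB1]
    · intro v hv hv'
      have hvle : v ≤ w₁ := by simpa using hv
      rw [Finset.mem_insert, Finset.mem_singleton] at hv'
      push_neg at hv'
      rw [hAvanish v (hvle.trans hw1N) (fun h => hv'.1 h) (h2 v hvle hv'.2), mul_zero]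
  have hsub2 : ({0, w₁, w₂} : Finset (ι → ℕ)) ⊆ Finset.Icc 0 w₂ := by
    intro v hv
    rcases Finset.mem_insert.mp hv with rfl | hv
    · simp
    rcases Finset.mem_insert.mp hv with rfl | hv
    · simpa using hw12
    · rw [Finset.mem_singleton.mp hv]; simp
  have hsum2 : ∑ v ∈ Finset.Icc 0 w₂,
      (∏ i : ι, ((N i - v i).choose (w₂ i - v i) : ℚ)) * A v = B2 + C' * A w₁ + A w₂ := by
    rw [← Finset.sum_subset hsub2 ?_]
    · rw [Finset.sum_insert ?_, Finset.sum_pair hw12ne]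
      · simp [hA0, hB2, hC']
        ring
      · rw [Finset.mem_insert, Finset.mem_singleton]
        push_neg
        exact ⟨fun h => hw1ne0 h.symm, fun h => hw2ne0 h.symm⟩
    · intro v hv hv'
      have hvle : v ≤ w₂ := by simpa using hv
      rw [Finset.mem_insert, Finset.mem_insert, Finset.mem_singleton] at hv'
      push_neg at hv'
      rw [hAvanish v (hvle.trans hw2N) (fun h => hv'.1 h) (h3 v hvle hv'.2.1 hv'.2.2), mul_zero]
  have hM1 := hMacW w₁ hw1N
  have hM2 := hMacW w₂ hw2N
  rw [hmin1, hsum1] at hM1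
  rw [hmin2, hsum2] at hM2
  have hAw1 : A w₁ = B1 * (d1 ^ 2 / D - 1) := by
    field_simp at hM1
    rw [← hB1, ← hd1] at hM1
    have e : B1 * d1 * d1 = D * (B1 + A w₁) := by rw [hM1, div_mul_cancel₀ _ hd1pos.ne']
    rw [mul_sub, mul_div_assoc', eq_sub_iff_add_eq, eq_div_iff hDpos.ne']
    linear_combination (-1 : ℚ) * e
  have hAw2 : A w₂ = B2 * (d2 ^ 2 / D - 1) - C' * A w₁ := by
    field_simp at hM2
    rw [← hB2, ← hd2] at hM2
    have e : B2 * d2 * d2 = D * (B2 + C' * A w₁ + A w₂) := by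
      rw [hM2, div_mul_cancel₀ _ hd2pos.ne']
    rw [eq_sub_iff_add_eq, mul_sub, mul_div_assoc', eq_sub_iff_add_eq, eq_div_iff hDpos.ne']
    linear_combination (-1 : ℚ) * e
  have hident : C' * B1 = B2 * K := by
    rw [hC', hB1, hB2, hK, ← Finset.prod_mul_distrib, ← Finset.prod_mul_distrib]
    refine Finset.prod_congr rfl fun i _ => ?_
    exact_mod_cast (Nat.mul_comm _ _).trans (Nat.choose_mul (n := N i) (hw12 i)).symm
  have hA2nn := hApos w₂ hw2N
  rw [hAw2, hAw1] at hA2nn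
  have hfin : B2 * (K * (d1 ^ 2 / D - 1)) ≤ B2 * (d2 ^ 2 / D - 1) := by
    rw [show C' * (B1 * (d1 ^ 2 / D - 1)) = B2 * (K * (d1 ^ 2 / D - 1)) by
      rw [← mul_assoc, hident]; ring] at hA2nn
    linarith
  exact le_of_mul_le_mul_left hfin hB2pos
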